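/- Let n, d, t ≥ 1 be integers, let u, v ∈ M_{n,d,t} with u ≥_slex v, and set L = L_t(u,v). Then the elementwise image τ^{t−1}(L) equals L_1(u^{τ^{t−1}}, v^{τ^{t−1}}), the squarefree lexsegment in the polynomial ring K[x_1,…,x_{n−(d−1)(t−1)}]. -/

import Mathlib

open MvPolynomial

/-- A degree-`d` `t`-spread monomial of `K[x_1,…,x_n]`, recorded by its weakly increasing
(1-based) sequence of variable indices `idx 0 ≤ idx 1 ≤ ⋯` with consecutive gaps at least `t`.
For `t ≥ 1` these are exactly the `t`-spread monomials `x_{i_1}⋯x_{i_d}` with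
`i_{j+1} - i_j ≥ t`, and for `t = 0` all monomials of degree `d` (written with sorted indices). -/
structure SpreadMono (n d t : ℕ) where
  idx : Fin d → ℕ
  one_le : ∀ j, 1 ≤ idx j
  le_n : ∀ j, idx j ≤ n
  spread : ∀ (j : Fin d) (h : (j : ℕ) + 1 < d), idx j + t ≤ idx ⟨(j : ℕ) + 1, h⟩

namespace SpreadMono

variable {n d t : ℕ}

/-- The (0-based) variable of `Fin n` corresponding to the `j`-th (1-based) index. -/
def var (u : SpreadMono n d t) (j : Fin d) : Fin n :=
  ⟨u.idx j - 1, by have h1 := u.one_le j; have h2 := u.le_n j; omega⟩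

/-- The exponent vector of the monomial `x_{i_1}⋯x_{i_d}`. -/
noncomputable def expVec (u : SpreadMono n d t) : Fin n →₀ ℕ :=
  ∑ j, Finsupp.single (u.var j) 1

/-- The monomial `x_{i_1}⋯x_{i_d}` as an element of `MvPolynomial (Fin n) K`. -/
noncomputable def toMvPoly (K : Type*) [Field K] (u : SpreadMono n d t) :
    MvPolynomial (Fin n) K :=
  MvPolynomial.monomial u.expVec 1

/-- Strict lexicographic order on index sequences. -/
def seqLT (f g : Fin d → ℕ) : Prop :=
  ∃ s : Fin d, (∀ j, j < s → f j = g j) ∧ f s < g s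

/-- Lexicographic order (≤) on index sequences. -/
def seqLE (f g : Fin d → ℕ) : Prop := f = g ∨ seqLT f g

/-- `u ≥_slex v`: a monomial is `slex`-larger iff its index sequence is lex-smaller. -/
def slexGE (u v : SpreadMono n d t) : Prop := seqLE u.idx v.idx

/-- `u >_slex v`. -/
def slexGT (u v : SpreadMono n d t) : Prop := seqLT u.idx v.idx

/-- The `t`-spread lexsegment `L_t(u,v) = {w : u ≥_slex w ≥_slex v}`. -/
def lexseg (u v : SpreadMono n d t) : Set (SpreadMono n d t) :=
  {w | slexGE u w ∧ slexGE w v}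

/-- The initial `t`-spread lexsegment `L^i_t(v) = {w : w ≥_slex v}`. -/
def initialSeg (v : SpreadMono n d t) : Set (SpreadMono n d t) :=
  {w | slexGE w v}

/-- The final `t`-spread lexsegment `L^f_t(u) = {w : w ≤_slex u}`. -/
def finalSeg (u : SpreadMono n d t) : Set (SpreadMono n d t) :=
  {w | slexGE u w}

/-- The ideal of `MvPolynomial (Fin n) K` generated by a set of spread monomials. -/
noncomputable def idealOf (K : Type*) [Field K] (A : Set (SpreadMono n d t)) :
    Ideal (MvPolynomial (Fin n) K) :=
  Ideal.span ((fun w => toMvPoly K w) '' A)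

end SpreadMono

/-- `a ≤_lex b` for exponent vectors of monomials of `K[x_1,…,x_m]`, for the lexicographic
order with `x_1 > x_2 > ⋯ > x_m`: either `a = b`, or at the first position where they
differ `b` has the larger exponent. -/
def monoLE {m : ℕ} (a b : Fin m →₀ ℕ) : Prop :=
  a = b ∨ ∃ i : Fin m, (∀ j, j < i → a j = b j) ∧ a i < b i

open SpreadMono


namespace SpreadMono

variable {n d t : ℕ}

lemma ext' {a b : SpreadMono n d t} (h : a.idx = b.idx) : a = b := by
  cases a; cases b; cases h; rfl

lemma idx_lb_aux (w : SpreadMono n d t) : ∀ k (h : k < d), k * t + 1 ≤ w.idx ⟨k, h⟩ := by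
  intro k
  induction k with
  | zero => intro h; simpa using w.one_le ⟨0, h⟩
  | succ k ih =>
    intro h
    have hk : k < d := Nat.lt_of_succ_lt h
    have h1 := ih hk
    have h2 := w.spread ⟨k, hk⟩ (by simpa using h)
    have h3 : (k + 1) * t = k * t + t := by ring
    simp only at h2
    omega

lemma idx_lb (w : SpreadMono n d t) (j : Fin d) : (j : ℕ) * t + 1 ≤ w.idx j := by
  have := idx_lb_aux w j j.isLt
  simpa using this

lemma mul_sub_one_lb (ht : 1 ≤ t) (w : SpreadMono n d t) (j : Fin d) :
    (j : ℕ) * (t - 1) < w.idx j := by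
  have h1 := idx_lb w j
  have h2 : (j : ℕ) * (t - 1) ≤ (j : ℕ) * t := Nat.mul_le_mul_left _ (by omega)
  omega

lemma seqLT_shift_iff (ht : 1 ≤ t) (w z : SpreadMono n d t) :
    seqLT (fun j => w.idx j - (j : ℕ) * (t - 1)) (fun j => z.idx j - (j : ℕ) * (t - 1)) ↔
      seqLT w.idx z.idx := by
  constructor
  · rintro ⟨s, hj, hs⟩
    refine ⟨s, fun j hjs => ?_, ?_⟩
    · have := hj j hjs
      have h1 := mul_sub_one_lb ht w j
      have h2 := mul_sub_one_lb ht z j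
      simp only at this
      omega
    · have h1 := mul_sub_one_lb ht w s
      have h2 := mul_sub_one_lb ht z s
      simp only at hs
      omega
  · rintro ⟨s, hj, hs⟩
    refine ⟨s, fun j hjs => ?_, ?_⟩
    · simp only [hj j hjs]
    · have h1 := mul_sub_one_lb ht w s
      simp only
      omega

end SpreadMono

theorem stmt8 (n d t : ℕ) (hn : 1 ≤ n) (hd : 1 ≤ d) (ht : 1 ≤ t)
    (u v : SpreadMono n d t) (huv : slexGE u v)
    (τ : SpreadMono n d t → SpreadMono (n - (d - 1) * (t - 1)) d 1)
    (hτ : ∀ w j, (τ w).idx j = w.idx j - (j : ℕ) * (t - 1)) :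
    τ '' lexseg u v = lexseg (τ u) (τ v) := by
  have hτ' : ∀ w : SpreadMono n d t, (τ w).idx = fun j => w.idx j - (j : ℕ) * (t - 1) := by
    intro w; funext j; exact hτ w j
  have key : ∀ w z : SpreadMono n d t, slexGE w z ↔ slexGE (τ w) (τ z) := by
    intro w z
    unfold slexGE seqLE
    rw [hτ' w, hτ' z, SpreadMono.seqLT_shift_iff ht]
    constructor
    · rintro (h | h)
      · left; funext j; simp [h]
      · right; exact h
    · rintro (h | h)
      · left; funext j
        have := congrFun h j
        have h1 := SpreadMono.mul_sub_one_lb ht w j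
        have h2 := SpreadMono.mul_sub_one_lb ht z j
        omega
      · right; exact h
  have hdn : (d - 1) * (t - 1) ≤ n := by
    have h1 := SpreadMono.idx_lb u ⟨d - 1, by omega⟩
    have h2 := u.le_n ⟨d - 1, by omega⟩
    have h3 : (d - 1) * (t - 1) ≤ (d - 1) * t := Nat.mul_le_mul_left _ (by omega)
    simp only at h1 h2
    omega
  ext z
  simp only [Set.mem_image, lexseg, Set.mem_setOf_eq]
  constructor
  · rintro ⟨w, ⟨h1, h2⟩, rfl⟩
    exact ⟨(key u w).1 h1, (key w v).1 h2⟩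
  · rintro ⟨h1, h2⟩
    have hw1 : ∀ j : Fin d, 1 ≤ z.idx j + (j : ℕ) * (t - 1) := fun j => by
      have := z.one_le j; omega
    have hw2 : ∀ j : Fin d, z.idx j + (j : ℕ) * (t - 1) ≤ n := fun j => by
      have hz := z.le_n j
      have hj : (j : ℕ) ≤ d - 1 := by have := j.isLt; omega
      have h3 : (j : ℕ) * (t - 1) ≤ (d - 1) * (t - 1) := Nat.mul_le_mul_right _ hj
      omega
    have hw3 : ∀ (j : Fin d) (h : (j : ℕ) + 1 < d),
        z.idx j + (j : ℕ) * (t - 1) + t ≤ z.idx ⟨(j : ℕ) + 1, h⟩ + ((j : ℕ) + 1) * (t - 1) := by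
      intro j h
      have hs := z.spread j h
      have e1 : ((j : ℕ) + 1) * (t - 1) = (j : ℕ) * (t - 1) + (t - 1) := by ring
      omega
    set w : SpreadMono n d t := ⟨fun j => z.idx j + (j : ℕ) * (t - 1), hw1, hw2, hw3⟩ with hwdef
    have hτw : τ w = z := by
      apply SpreadMono.ext'
      rw [hτ' w]
      funext j
      simp [hwdef]
    rw [← hτw] at h1 h2
    exact ⟨w, ⟨(key u w).2 h1, (key w v).2 h2⟩, hτw⟩
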